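/- Let (X₁,Y₁) and (X₂,Y₂) be i.i.d. pairs with X₁ uniform on {0,1} and Y₁ finite-valued. Then Z(X₁+X₂ | Y₁, Y₂) ≥ Z(X₁|Y₁), where addition is mod 2. -/
import Mathlib


open Finset

/-- Bhattacharyya parameter `Z(X|Y) = ∑_y √(P(y|0)·P(y|1))` for `X` uniform on `{0,1}`
with joint pmf `p` (so `P(y|x) = 2·p x y`). -/
noncomputable def bhat {β : Type} [Fintype β] (p : Bool → β → ℝ) : ℝ :=
  ∑ y : β, Real.sqrt ((2 * p false y) * (2 * p true y))

private lemma sqrt_four_mul (x : ℝ) : Real.sqrt (4 * x) = 2 * Real.sqrt x := by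
  rw [show (4:ℝ) = 2^2 by norm_num, Real.sqrt_mul (by positivity), Real.sqrt_sq (by norm_num)]

private lemma cs_sqrt (u v w z : ℝ) (hu : 0 ≤ u) (hv : 0 ≤ v) (hw : 0 ≤ w) (hz : 0 ≤ z) :
    Real.sqrt (u * w) + Real.sqrt (v * z) ≤ Real.sqrt ((u + v) * (w + z)) := by
  rw [Real.le_sqrt (by positivity) (mul_nonneg (add_nonneg hu hv) (add_nonneg hw hz))]
  have h1 := Real.sq_sqrt (mul_nonneg hu hw)
  have h2 := Real.sq_sqrt (mul_nonneg hv hz)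
  have h3 : Real.sqrt (u * w) * Real.sqrt (v * z) = Real.sqrt (u * z) * Real.sqrt (v * w) := by
    rw [← Real.sqrt_mul (by positivity), ← Real.sqrt_mul (by positivity)]
    ring_nf
  have h4 := Real.sq_sqrt (mul_nonneg hu hz)
  have h5 := Real.sq_sqrt (mul_nonneg hv hw)
  nlinarith [sq_nonneg (Real.sqrt (u * z) - Real.sqrt (v * w))]

/-- For i.i.d. pairs `(X₁,Y₁)`, `(X₂,Y₂)` with uniform binary inputs,
`Z(X₁+X₂ | Y₁, Y₂) ≥ Z(X₁|Y₁)`.  The joint pmf of `(X₁+X₂ ; (Y₁,Y₂))` is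
`s, (y₁,y₂) ↦ ∑_{x₁} p x₁ y₁ * p (s xor x₁) y₂`. -/
theorem bhat_le_bhat_plus {β : Type} [Fintype β] (p : Bool → β → ℝ)
    (hp : ∀ x y, 0 ≤ p x y)
    (hpsum : ∑ x : Bool, ∑ y : β, p x y = 1)
    (hpu : ∀ x : Bool, ∑ y : β, p x y = 1 / 2) :
    bhat p ≤
      bhat (fun s (yy : β × β) => ∑ x₁ : Bool, p x₁ yy.1 * p (xor s x₁) yy.2) := by
  have key : ∀ y₁ y₂ : β,
      (p false y₁ + p true y₁) * Real.sqrt ((2 * p false y₂) * (2 * p true y₂)) ≤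
      Real.sqrt ((2 * (p false y₁ * p false y₂ + p true y₁ * p true y₂)) *
        (2 * (p false y₁ * p true y₂ + p true y₁ * p false y₂))) := by
    intro y₁ y₂
    have h := cs_sqrt (p false y₁ * p false y₂) (p true y₁ * p true y₂)
      (p false y₁ * p true y₂) (p true y₁ * p false y₂)
      (mul_nonneg (hp _ _) (hp _ _)) (mul_nonneg (hp _ _) (hp _ _))
      (mul_nonneg (hp _ _) (hp _ _)) (mul_nonneg (hp _ _) (hp _ _))
    have e1 : p false y₁ * p false y₂ * (p false y₁ * p true y₂) =
        (p false y₁)^2 * (p false y₂ * p true y₂) := by ring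
    have e2 : p true y₁ * p true y₂ * (p true y₁ * p false y₂) =
        (p true y₁)^2 * (p false y₂ * p true y₂) := by ring
    rw [e1, e2, Real.sqrt_mul (sq_nonneg _), Real.sqrt_mul (sq_nonneg _),
      Real.sqrt_sq (hp _ _), Real.sqrt_sq (hp _ _)] at h
    have eL : (2 * p false y₂) * (2 * p true y₂) = 4 * (p false y₂ * p true y₂) := by ring
    have eR : (2 * (p false y₁ * p false y₂ + p true y₁ * p true y₂)) *
        (2 * (p false y₁ * p true y₂ + p true y₁ * p false y₂)) =
        4 * ((p false y₁ * p false y₂ + p true y₁ * p true y₂) *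
          (p false y₁ * p true y₂ + p true y₁ * p false y₂)) := by ring
    rw [eL, eR, sqrt_four_mul, sqrt_four_mul]
    nlinarith [h]
  have hsum1 : ∑ y : β, (p false y + p true y) = 1 := by
    rw [Finset.sum_add_distrib, hpu false, hpu true]; norm_num
  calc bhat p = (∑ y₁ : β, (p false y₁ + p true y₁)) * bhat p := by rw [hsum1, one_mul]
    _ = ∑ y₁ : β, ∑ y₂ : β,
        (p false y₁ + p true y₁) * Real.sqrt ((2 * p false y₂) * (2 * p true y₂)) := by
        rw [Finset.sum_mul]
        exact Finset.sum_congr rfl fun y₁ _ => by rw [bhat, Finset.mul_sum]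
    _ ≤ ∑ y₁ : β, ∑ y₂ : β,
        Real.sqrt ((2 * (p false y₁ * p false y₂ + p true y₁ * p true y₂)) *
          (2 * (p false y₁ * p true y₂ + p true y₁ * p false y₂))) := by
        apply Finset.sum_le_sum; intro y₁ _
        apply Finset.sum_le_sum; intro y₂ _
        exact key y₁ y₂
    _ = _ := by
        rw [bhat, Fintype.sum_prod_type]
        refine Finset.sum_congr rfl fun y₁ _ => Finset.sum_congr rfl fun y₂ _ => ?_
        simp only [Fintype.sum_bool]
        congr 1
        simp only [Bool.xor_false, Bool.xor_true, Bool.not_true, Bool.not_false]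
        ring
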